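/- Let 𝕂 be a non-discrete Hausdorff topological field, E a Hausdorff topological 𝕂-vector space, U ⊆ 𝕂 open and non-empty, and f : U → E a map. Then f is C¹ in the BGN sense if and only if there exists a continuous map f⟨¹⟩ : U × U → E such that f(s) − f(t) = (s − t) • f⟨¹⟩(s,t) for all s, t ∈ U; in this case df(t)(1) = f⟨¹⟩(t,t), and t ↦ f⟨¹⟩(t,t) is a continuous curve U → E. -/

import Mathlib

open Filter Topology


/-- Lemma 6.1 of Bertram–Glöckner–Neeb: a curve `f : U → E` (with `U ⊆ 𝕂` open, nonempty)
is C¹ in the BGN sense iff there is a continuous map `f⟨¹⟩ : U × U → E` with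
`f(s) − f(t) = (s − t) • f⟨¹⟩(s,t)` for all `s, t ∈ U`; in that case `df(t)(1) = f⟨¹⟩(t,t)`
and `t ↦ f⟨¹⟩(t,t)` is a continuous curve on `U`. -/
theorem stmt_17 (𝕂 : Type*) [Field 𝕂] [TopologicalSpace 𝕂] [IsTopologicalRing 𝕂] [T2Space 𝕂]
    (hK : Dense {t : 𝕂 | t ≠ 0})
    (E : Type*) [AddCommGroup E] [Module 𝕂 E] [TopologicalSpace E]
    [IsTopologicalAddGroup E] [ContinuousSMul 𝕂 E] [T2Space E]
    (U : Set 𝕂) (hU : IsOpen U) (hne : U.Nonempty) (f : 𝕂 → E) :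
    ((∃ f1 : 𝕂 × 𝕂 × 𝕂 → E,
        ContinuousOn f1 {p : 𝕂 × 𝕂 × 𝕂 | p.1 ∈ U ∧ p.1 + p.2.2 • p.2.1 ∈ U} ∧
        ∀ p : 𝕂 × 𝕂 × 𝕂, p.1 ∈ U → p.1 + p.2.2 • p.2.1 ∈ U →
          f (p.1 + p.2.2 • p.2.1) - f p.1 = p.2.2 • f1 p) ↔
      (∃ g : 𝕂 × 𝕂 → E, ContinuousOn g (U ×ˢ U) ∧
        ∀ s ∈ U, ∀ t ∈ U, f s - f t = (s - t) • g (s, t))) ∧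
    ∀ g : 𝕂 × 𝕂 → E, ContinuousOn g (U ×ˢ U) →
      (∀ s ∈ U, ∀ t ∈ U, f s - f t = (s - t) • g (s, t)) →
      ContinuousOn (fun t : 𝕂 => g (t, t)) U ∧
      ∀ f1 : 𝕂 × 𝕂 × 𝕂 → E,
        ContinuousOn f1 {p : 𝕂 × 𝕂 × 𝕂 | p.1 ∈ U ∧ p.1 + p.2.2 • p.2.1 ∈ U} →
        (∀ p : 𝕂 × 𝕂 × 𝕂, p.1 ∈ U → p.1 + p.2.2 • p.2.1 ∈ U →
          f (p.1 + p.2.2 • p.2.1) - f p.1 = p.2.2 • f1 p) →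
        ∀ t ∈ U, f1 (t, 1, 0) = g (t, t) := by
  have hS : IsOpen {p : 𝕂 × 𝕂 × 𝕂 | p.1 ∈ U ∧ p.1 + p.2.2 • p.2.1 ∈ U} := by
    have h1 : Continuous fun p : 𝕂 × 𝕂 × 𝕂 => p.1 := continuous_fst
    have h2 : Continuous fun p : 𝕂 × 𝕂 × 𝕂 => p.1 + p.2.2 • p.2.1 := by
      exact continuous_fst.add ((continuous_snd.snd).smul continuous_snd.fst)
    exact (hU.preimage h1).inter (hU.preimage h2)
  have hne0 : (𝓝[≠] (0 : 𝕂)).NeBot := by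
    have := hK 0
    rw [mem_closure_iff_nhdsWithin_neBot] at this
    exact this
  constructor
  · constructor
    · rintro ⟨f1, hc, he⟩
      refine ⟨fun p => f1 (p.2, 1, p.1 - p.2), ?_, ?_⟩
      · have hcont : Continuous fun p : 𝕂 × 𝕂 => ((p.2, 1, p.1 - p.2) : 𝕂 × 𝕂 × 𝕂) :=
          continuous_snd.prodMk (continuous_const.prodMk (continuous_fst.sub continuous_snd))
        refine hc.comp hcont.continuousOn ?_
        rintro ⟨s, t⟩ ⟨hs, ht⟩
        simp only [Set.mem_setOf_eq, smul_eq_mul, mul_one]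
        constructor
        · exact ht
        · simpa using hs
      · intro s hs t ht
        have := he (t, 1, s - t) ht (by simpa using hs)
        simpa using this
    · rintro ⟨g, hc, he⟩
      refine ⟨fun p => p.2.1 • g (p.1 + p.2.2 • p.2.1, p.1), ?_, ?_⟩
      · have hcont : Continuous fun p : 𝕂 × 𝕂 × 𝕂 => ((p.1 + p.2.2 • p.2.1, p.1) : 𝕂 × 𝕂) :=
          (continuous_fst.add ((continuous_snd.snd).smul continuous_snd.fst)).prodMk
            continuous_fst
        refine (continuous_snd.fst.continuousOn.smul (hc.comp hcont.continuousOn ?_))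
        rintro ⟨x, v, t⟩ ⟨hx, hxt⟩
        exact ⟨hxt, hx⟩
      · rintro ⟨x, v, t⟩ hx hxt
        have := he (x + t • v) hxt x hx
        simp only [add_sub_cancel_left] at this
        rw [this, smul_eq_mul, mul_smul]
        simp [smul_eq_mul]
  · intro g hgc hge
    constructor
    · have hd : Continuous fun t : 𝕂 => ((t, t) : 𝕂 × 𝕂) :=
        continuous_id.prodMk continuous_id
      exact hgc.comp hd.continuousOn (fun t ht => ⟨ht, ht⟩)
    · intro f1 hf1c hf1e t ht
      have hmem : ((t, 1, 0) : 𝕂 × 𝕂 × 𝕂) ∈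
          {p : 𝕂 × 𝕂 × 𝕂 | p.1 ∈ U ∧ p.1 + p.2.2 • p.2.1 ∈ U} := by
        refine ⟨ht, ?_⟩
        simpa using ht
      have hf1at : ContinuousAt f1 (t, 1, 0) := hf1c.continuousAt (hS.mem_nhds hmem)
      have hgat : ContinuousAt g (t, t) :=
        hgc.continuousAt ((hU.prod hU).mem_nhds ⟨ht, ht⟩)
      have h1 : Filter.Tendsto (fun s : 𝕂 => f1 (t, 1, s)) (𝓝[≠] 0) (𝓝 (f1 (t, 1, 0))) := by
        have : Continuous fun s : 𝕂 => ((t, 1, s) : 𝕂 × 𝕂 × 𝕂) :=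
          continuous_const.prodMk (continuous_const.prodMk continuous_id)
        have ht' : Filter.Tendsto (fun s : 𝕂 => ((t, 1, s) : 𝕂 × 𝕂 × 𝕂)) (𝓝 0) (𝓝 (t, 1, 0)) :=
          this.tendsto' 0 _ rfl
        exact (Filter.Tendsto.comp hf1at ht').mono_left nhdsWithin_le_nhds
      have h2 : Filter.Tendsto (fun s : 𝕂 => g (t + s, t)) (𝓝[≠] 0) (𝓝 (g (t, t))) := by
        have hc : Continuous fun s : 𝕂 => ((t + s, t) : 𝕂 × 𝕂) :=
          (continuous_const.add continuous_id).prodMk continuous_const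
        have ht2 : Filter.Tendsto (fun s : 𝕂 => ((t + s, t) : 𝕂 × 𝕂)) (𝓝 0) (𝓝 (t, t)) :=
          hc.tendsto' 0 _ (by simp)
        exact (Filter.Tendsto.comp hgat ht2).mono_left nhdsWithin_le_nhds
      have heq : ∀ᶠ s in 𝓝[≠] (0 : 𝕂), f1 (t, 1, s) = g (t + s, t) := by
        have hnb : ∀ᶠ s in 𝓝 (0 : 𝕂), t + s ∈ U := by
          have hc : Continuous fun s : 𝕂 => t + s := continuous_const.add continuous_id
          have : t + (0 : 𝕂) ∈ U := by simpa using ht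
          exact hc.continuousAt.eventually_mem (hU.mem_nhds this)
        filter_upwards [eventually_nhdsWithin_of_eventually_nhds hnb,
          self_mem_nhdsWithin] with s hsU (hs : s ≠ 0)
        have e1 := hf1e (t, 1, s) ht (by simpa using hsU)
        have e2 := hge (t + s) hsU t ht
        simp only [smul_eq_mul, mul_one, add_sub_cancel_left] at e1 e2
        have : s • f1 (t, 1, s) = s • g (t + s, t) := by
          rw [← e1, e2]
        have := congrArg (fun x => s⁻¹ • x) this
        simpa [inv_smul_smul₀ hs] using this
      exact tendsto_nhds_unique (h1.congr' heq) h2
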